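/- Natural gradient of the KL divergence in its first argument: let t ↦ q(t) be a curve of positive densities on Ω, differentiable at t₀ in each coordinate, with ∑_x q(t)(x) = 1 for all t, and let r be a fixed positive density on Ω. Then t ↦ KL(q(t) ‖ r) is differentiable at t₀ with derivative equal to ⟨ q̇, −s_{q(t₀)}(r) ⟩_{q(t₀)} = −∑_x q̇(x) · s_{q(t₀)}(r)(x) · q(t₀)(x), where q̇(x) = (d/dt log q(t)(x))|_{t=t₀}. -/

import Mathlib

/-- The exponential chart of a positive density `q` at `p` on a finite set:
`s_p(q)(x) = log (q x / p x) - E_p[log (q/p)]`. -/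
noncomputable def expChart {Ω : Type*} [Fintype Ω] (p q : Ω → ℝ) (x : Ω) : ℝ :=
  Real.log (q x / p x) - ∑ y, Real.log (q y / p y) * p y

/-- Natural gradient of the KL divergence in the first argument:
along a curve `t ↦ q t` of positive densities with score `q̇` at `t₀`,
`(d/dt) KL(q t ‖ r) |_{t₀} = ⟨q̇, -s_{q t₀}(r)⟩_{q t₀}`. -/
theorem KL_grad_first {Ω : Type*} [Fintype Ω] [Nonempty Ω]
    (q : ℝ → Ω → ℝ) (qdot : Ω → ℝ) (t₀ : ℝ)
    (hpos : ∀ t x, 0 < q t x) (hsum : ∀ t, ∑ x, q t x = 1)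
    (hscore : ∀ x, HasDerivAt (fun t => Real.log (q t x)) (qdot x) t₀)
    (r : Ω → ℝ) (hr : ∀ x, 0 < r x) (hrs : ∑ x, r x = 1) :
    HasDerivAt (fun t => ∑ x, q t x * Real.log (q t x / r x))
      (-∑ x, qdot x * expChart (q t₀) r x * q t₀ x) t₀ := by
  -- derivative of each coordinate q t x
  have hq : ∀ x, HasDerivAt (fun t => q t x) (q t₀ x * qdot x) t₀ := by
    intro x
    have h := ((hscore x).exp)
    have hfun : (fun t => Real.exp (Real.log (q t x))) = fun t => q t x := by
      funext t; exact Real.exp_log (hpos t x)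
    rw [hfun, Real.exp_log (hpos t₀ x)] at h
    exact h
  -- sum of derivatives is zero
  have hS : ∑ x, q t₀ x * qdot x = 0 := by
    have h1 : HasDerivAt (fun t => ∑ x, q t x) (∑ x, q t₀ x * qdot x) t₀ :=
      HasDerivAt.fun_sum (fun x _ => hq x)
    have h2 : (fun t => ∑ x, q t x) = fun _ : ℝ => (1 : ℝ) := by
      funext t; exact hsum t
    rw [h2] at h1
    exact h1.unique (hasDerivAt_const _ _)
  -- derivative of each term
  have hterm : ∀ x, HasDerivAt (fun t => q t x * Real.log (q t x / r x))
      (qdot x * q t₀ x * (Real.log (q t₀ x) - Real.log (r x) + 1)) t₀ := by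
    intro x
    have h : HasDerivAt (fun t => q t x * (Real.log (q t x) - Real.log (r x)))
        (q t₀ x * qdot x * (Real.log (q t₀ x) - Real.log (r x))
          + q t₀ x * qdot x) t₀ := by
      have := (hq x).fun_mul ((hscore x).sub_const (Real.log (r x)))
      convert this using 1
    have hfun : (fun t => q t x * (Real.log (q t x) - Real.log (r x)))
        = fun t => q t x * Real.log (q t x / r x) := by
      funext t
      rw [Real.log_div (hpos t x).ne' (hr x).ne']
    rw [hfun] at h
    convert h using 1
    ring
  have hmain : HasDerivAt (fun t => ∑ x, q t x * Real.log (q t x / r x))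
      (∑ x, qdot x * q t₀ x * (Real.log (q t₀ x) - Real.log (r x) + 1)) t₀ :=
    HasDerivAt.fun_sum (fun x _ => hterm x)
  convert hmain using 1
  set C := ∑ y, Real.log (r y / q t₀ y) * q t₀ y with hC
  have hexp : ∀ x, expChart (q t₀) r x
      = (Real.log (r x) - Real.log (q t₀ x)) - C := by
    intro x
    unfold expChart
    rw [Real.log_div (hr x).ne' (hpos t₀ x).ne']
  have h1 : ∑ x, qdot x * expChart (q t₀) r x * q t₀ x
      = ∑ x, qdot x * ((Real.log (r x) - Real.log (q t₀ x)) - C) * q t₀ x :=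
    Finset.sum_congr rfl fun x _ => by rw [hexp x]
  have key : ∀ x, qdot x * q t₀ x * (Real.log (q t₀ x) - Real.log (r x) + 1)
      = -(qdot x * ((Real.log (r x) - Real.log (q t₀ x)) - C) * q t₀ x)
        + (1 - C) * (q t₀ x * qdot x) := by
    intro x; ring
  have h2 : (∑ x, qdot x * q t₀ x * (Real.log (q t₀ x) - Real.log (r x) + 1))
      = ∑ x, (-(qdot x * ((Real.log (r x) - Real.log (q t₀ x)) - C) * q t₀ x)
        + (1 - C) * (q t₀ x * qdot x)) :=
    Finset.sum_congr rfl fun x _ => key x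
  rw [h1, h2, Finset.sum_add_distrib, ← Finset.mul_sum, hS, mul_zero, add_zero,
    Finset.sum_neg_distrib]
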